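/- Let n ≥ 2 and let f : E^n → E^n be a surjective function strongly preserving some distance r > 0. Then for all x, y ∈ E^n, d(x, y) < r if and only if d(f(x), f(y)) < r. In particular, for each x ∈ E^n the image of the closed ball satisfies f(D(x, r)) = D(f(x), r), where D(z, r) = {w : d(z, w) ≤ r}. -/

import Mathlib

open EuclideanSpace RealInnerProductSpace

set_option maxHeartbeats 1000000

lemma exists_unit_orthogonal (n : ℕ) (hn : 2 ≤ n) (v : EuclideanSpace ℝ (Fin n)) :
    ∃ e : EuclideanSpace ℝ (Fin n), ‖e‖ = 1 ∧ (inner ℝ (v) (e) : ℝ) = 0 := by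
  set K : Submodule ℝ (EuclideanSpace ℝ (Fin n)) := ℝ ∙ v
  have h1 : Module.finrank ℝ K + Module.finrank ℝ Kᗮ = n := by
    simpa [finrank_euclideanSpace, Fintype.card_fin] using
      Submodule.finrank_add_finrank_orthogonal K
  have h2 : Module.finrank ℝ K ≤ 1 := by
    by_cases hv : v = 0
    · simp only [K]
      exact (finrank_span_le_card ({v} : Set (EuclideanSpace ℝ (Fin n)))).trans (by simp)
    · simp [K, finrank_span_singleton hv]
  have h3 : Kᗮ ≠ ⊥ := by
    intro hbot
    rw [hbot] at h1
    simp at h1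
    omega
  obtain ⟨w, hw, hw0⟩ := Submodule.exists_mem_ne_zero_of_ne_bot h3
  refine ⟨‖w‖⁻¹ • w, ?_, ?_⟩
  · have : ‖w‖ ≠ 0 := norm_ne_zero_iff.mpr hw0
    simp [norm_smul, this]
  · have : (inner ℝ (v) (w : EuclideanSpace ℝ (Fin n)) : ℝ) = 0 := by
      have := (Submodule.mem_orthogonal K w).mp hw v (Submodule.mem_span_singleton_self v)
      simpa [real_inner_comm] using this
    simp [inner_smul_right, this]

lemma existsA (n : ℕ) (hn : 2 ≤ n) (r : ℝ) (hr : 0 < r)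
    (x y : EuclideanSpace ℝ (Fin n)) (h : dist x y ≤ 2 * r) :
    ∃ z, dist x z = r ∧ dist y z = r := by
  obtain ⟨e, he, hev⟩ := exists_unit_orthogonal n hn (y - x)
  set d := dist x y with hd
  have hd0 : 0 ≤ d := dist_nonneg
  have hc2 : 0 ≤ r ^ 2 - d ^ 2 / 4 := by nlinarith
  set c := Real.sqrt (r ^ 2 - d ^ 2 / 4) with hc
  have hcsq : c ^ 2 = r ^ 2 - d ^ 2 / 4 := Real.sq_sqrt hc2
  refine ⟨x + (1 / 2 : ℝ) • (y - x) + c • e, ?_, ?_⟩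
  · have hz : (x + (1 / 2 : ℝ) • (y - x) + c • e) - x = (1 / 2 : ℝ) • (y - x) + c • e := by
      abel
    have hnv : ‖y - x‖ = d := by rw [hd, dist_eq_norm]; exact norm_sub_rev x y ▸ rfl
    have hinner : (inner ℝ ((1 / 2 : ℝ) • (y - x)) (c • e) : ℝ) = 0 := by
      simp [inner_smul_left, inner_smul_right, hev]
    have : ‖(1 / 2 : ℝ) • (y - x) + c • e‖ ^ 2 = r ^ 2 := by
      rw [norm_add_sq_real, hinner]
      simp only [norm_smul, Real.norm_eq_abs]
      rw [hnv, he]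
      have hac : |c| = c := abs_of_nonneg (Real.sqrt_nonneg _)
      rw [hac, show |(1/2:ℝ)| = 1/2 by norm_num]
      nlinarith
    rw [dist_eq_norm, norm_sub_rev, hz]
    nlinarith [norm_nonneg ((1 / 2 : ℝ) • (y - x) + c • e), sq_abs r]
  · have hz : (x + (1 / 2 : ℝ) • (y - x) + c • e) - y = -((1 / 2 : ℝ) • (y - x)) + c • e := by
      rw [smul_sub]
      module
    have hnv : ‖y - x‖ = d := by rw [hd, dist_eq_norm]; exact norm_sub_rev x y ▸ rfl
    have hinner : (inner ℝ (-((1 / 2 : ℝ) • (y - x))) (c • e) : ℝ) = 0 := by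
      simp [inner_smul_left, inner_smul_right, hev]
    have : ‖-((1 / 2 : ℝ) • (y - x)) + c • e‖ ^ 2 = r ^ 2 := by
      rw [norm_add_sq_real, hinner]
      simp only [norm_neg, norm_smul, Real.norm_eq_abs]
      rw [hnv, he]
      have hac : |c| = c := abs_of_nonneg (Real.sqrt_nonneg _)
      rw [hac, show |(1/2:ℝ)| = 1/2 by norm_num]
      nlinarith
    rw [dist_eq_norm, norm_sub_rev, hz]
    nlinarith [norm_nonneg (-((1 / 2 : ℝ) • (y - x)) + c • e)]

lemma existsB (n : ℕ) (r : ℝ) (hr : 0 < r)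
    (x y : EuclideanSpace ℝ (Fin n)) (h : r < dist x y) :
    ∃ z, dist x z = r ∧ 2 * r < dist y z := by
  set d := dist x y with hd
  have hd0 : 0 < d := lt_trans hr h
  have hnv : ‖x - y‖ = d := by rw [hd, dist_eq_norm]
  refine ⟨x + (r / d) • (x - y), ?_, ?_⟩
  · rw [dist_eq_norm]
    have : x - (x + (r / d) • (x - y)) = -((r / d) • (x - y)) := by abel
    rw [this, norm_neg, norm_smul, Real.norm_eq_abs, abs_of_nonneg (by positivity), hnv]
    field_simp
  · rw [dist_eq_norm]
    have : y - (x + (r / d) • (x - y)) = -((1 + r / d) • (x - y)) := by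
      rw [add_smul, one_smul]
      module
    rw [this, norm_neg, norm_smul, Real.norm_eq_abs, abs_of_nonneg (by positivity), hnv]
    have : (1 + r / d) * d = d + r := by field_simp
    rw [this]
    linarith

theorem stmt_17 (n : ℕ) (hn : 2 ≤ n)
    (f : EuclideanSpace ℝ (Fin n) → EuclideanSpace ℝ (Fin n))
    (hf : Function.Surjective f)
    (r : ℝ) (hr : 0 < r)
    (hpr : ∀ x y, dist x y = r ↔ dist (f x) (f y) = r) :
    (∀ x y, dist x y < r ↔ dist (f x) (f y) < r) ∧
    (∀ x, f '' {y | dist x y ≤ r} = {y | dist (f x) y ≤ r}) := by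
  -- Step 1: d(x,y) ≤ 2r ↔ d(fx,fy) ≤ 2r
  have h2r : ∀ x y, dist x y ≤ 2 * r ↔ dist (f x) (f y) ≤ 2 * r := by
    intro x y
    constructor
    · intro h
      obtain ⟨z, hxz, hyz⟩ := existsA n hn r hr x y h
      have h1 := (hpr x z).mp hxz
      have h2 := (hpr y z).mp hyz
      calc dist (f x) (f y) ≤ dist (f x) (f z) + dist (f z) (f y) := dist_triangle _ _ _
        _ = 2 * r := by rw [h1, dist_comm, h2]; ring
    · intro h
      obtain ⟨z', hxz, hyz⟩ := existsA n hn r hr (f x) (f y) h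
      obtain ⟨z, rfl⟩ := hf z'
      have h1 := (hpr x z).mpr hxz
      have h2 := (hpr y z).mpr hyz
      calc dist x y ≤ dist x z + dist z y := dist_triangle _ _ _
        _ = 2 * r := by rw [h1, dist_comm, h2]; ring
  -- Step 2: d(x,y) ≤ r ↔ d(fx,fy) ≤ r
  have hler : ∀ x y, dist x y ≤ r ↔ dist (f x) (f y) ≤ r := by
    intro x y
    constructor
    · intro h
      by_contra hc
      push_neg at hc
      obtain ⟨z', hxz, hyz⟩ := existsB n r hr (f x) (f y) hc
      obtain ⟨z, rfl⟩ := hf z'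
      have h1 := (hpr x z).mpr hxz
      have h2 : dist y z ≤ 2 * r :=
        (dist_triangle y x z).trans (by rw [dist_comm y x, h1]; linarith)
      exact absurd ((h2r y z).mp h2) (not_le.mpr hyz)
    · intro h
      by_contra hc
      push_neg at hc
      obtain ⟨z, hxz, hyz⟩ := existsB n r hr x y hc
      have h1 := (hpr x z).mp hxz
      have h2 : dist (f y) (f z) ≤ 2 * r :=
        (dist_triangle (f y) (f x) (f z)).trans (by rw [dist_comm (f y) (f x), h1]; linarith)
      exact absurd ((h2r y z).mpr h2) (not_le.mpr hyz)
  refine ⟨?_, ?_⟩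
  · intro x y
    constructor
    · intro h
      rcases lt_or_eq_of_le ((hler x y).mp h.le) with h' | h'
      · exact h'
      · have := (hpr x y).mpr h'
        linarith
    · intro h
      rcases lt_or_eq_of_le ((hler x y).mpr h.le) with h' | h'
      · exact h'
      · have := (hpr x y).mp h'
        linarith
  · intro x
    ext w
    simp only [Set.mem_image, Set.mem_setOf_eq]
    constructor
    · rintro ⟨y, hy, rfl⟩
      exact (hler x y).mp hy
    · intro hw
      obtain ⟨y, rfl⟩ := hf w
      exact ⟨y, (hler x y).mpr hw, rfl⟩
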